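/- Let ℓ, ℓ_x be naturals with ℓ_x + 1 < ℓ, let ξ be a natural with 0 < ξ < 2^{ℓ_x}, let x := 2^ℓ − ξ (a negative input with absolute value ξ), and let R be any natural with R < 2^ℓ. For each natural j, let t'_j be the unique natural in [0, 2^{ℓ−j}) congruent to ⌊((2^ℓ − ξ + R) mod 2^ℓ)/2^j⌋ − ⌊R/2^j⌋ modulo 2^{ℓ−j}. Then there exist naturals λ', λ'' with λ' ≤ λ'' ≤ ℓ_x such that for every j ≤ ℓ_x: if λ' ≤ j ≤ λ'' then t'_j = 2^{ℓ−j} − 1, and if j > λ'' then t'_j = 0. -/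

import Mathlib

/-- Auxiliary: iterated integer division by powers of two. -/
private lemma aux_ediv_succ (a : ℤ) (j : ℕ) : a / 2 ^ (j + 1) = a / 2 ^ j / 2 := by
  have hj : (0:ℤ) < 2 ^ j := by positivity
  have h1 : 2 ^ j * (a / 2 ^ j) + a % 2 ^ j = a := Int.mul_ediv_add_emod a (2 ^ j)
  have h2 : 0 ≤ a % 2 ^ j := Int.emod_nonneg a (by positivity)
  have h3 : a % 2 ^ j < 2 ^ j := Int.emod_lt_of_pos a hj
  set q := a / 2 ^ j with hq
  have h4 : 2 * (q / 2) + q % 2 = q := Int.mul_ediv_add_emod q 2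
  have h5 : 0 ≤ q % 2 := Int.emod_nonneg q (by norm_num)
  have h6 : q % 2 < 2 := Int.emod_lt_of_pos q (by norm_num)
  have ha : a = 2 ^ j * (q % 2) + a % 2 ^ j + 2 ^ (j+1) * (q / 2) := by
    rw [pow_succ]; ring_nf; nlinarith [h1, h4]
  have hlt : 2 ^ j * (q % 2) + a % 2 ^ j < 2 ^ (j+1) := by
    rw [pow_succ]; nlinarith
  have hge : 0 ≤ 2 ^ j * (q % 2) + a % 2 ^ j := by positivity
  rw [ha, Int.add_mul_ediv_left _ _ (by positivity : (2:ℤ) ^ (j+1) ≠ 0),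
    Int.ediv_eq_zero_of_lt hge hlt, zero_add]

/-- pattern of the deterministic truncation sequence for a
negative input: a (possibly empty) run of (2^(ℓ-j) - 1)'s followed by 0's. -/
theorem stmt_14 (ℓ ℓx : ℕ) (hℓ : ℓx + 1 < ℓ) (ξ : ℕ) (hξ0 : 0 < ξ) (hξ : ξ < 2 ^ ℓx)
    (R : ℕ) (hR : R < 2 ^ ℓ) (t' : ℕ → ℕ)
    (ht1 : ∀ j, t' j < 2 ^ (ℓ - j))
    (ht2 : ∀ j, Int.ModEq (2 ^ (ℓ - j)) (t' j : ℤ)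
      ((((2 ^ ℓ - ξ + R) % 2 ^ ℓ / 2 ^ j : ℕ) : ℤ) - ((R / 2 ^ j : ℕ) : ℤ))) :
    ∃ lam' lam'' : ℕ, lam' ≤ lam'' ∧ lam'' ≤ ℓx ∧
      ∀ j ≤ ℓx, (lam' ≤ j → j ≤ lam'' → t' j = 2 ^ (ℓ - j) - 1) ∧
        (lam'' < j → t' j = 0) := by
  -- integer "borrow count"
  set d : ℕ → ℤ := fun j => (R : ℤ) / 2 ^ j - ((R : ℤ) - (ξ : ℤ)) / 2 ^ j with hd
  have hpow : ∀ j : ℕ, (0:ℤ) < 2 ^ j := fun j => by positivity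
  have h1 : ∀ j, 0 ≤ d j := by
    intro j
    have := Int.ediv_le_ediv (hpow j) (by linarith [Int.natCast_pos.2 hξ0] :
      (R : ℤ) - (ξ : ℤ) ≤ (R : ℤ))
    simp only [hd]; omega
  have h0 : d 0 = (ξ : ℤ) := by simp [hd]
  -- step facts
  have hstep : ∀ j, d (j+1) ≤ d j ∧ (2 ≤ d j → 1 ≤ d (j+1)) := by
    intro j
    have e1 : (R:ℤ) / 2 ^ (j+1) = (R:ℤ) / 2 ^ j / 2 := aux_ediv_succ _ j
    have e2 : ((R:ℤ) - ξ) / 2 ^ (j+1) = ((R:ℤ) - ξ) / 2 ^ j / 2 := aux_ediv_succ _ j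
    have hA : 2 * ((R:ℤ) / 2 ^ j / 2) + ((R:ℤ) / 2 ^ j) % 2 = (R:ℤ) / 2 ^ j :=
      Int.mul_ediv_add_emod _ 2
    have hB : 2 * (((R:ℤ) - ξ) / 2 ^ j / 2) + (((R:ℤ) - ξ) / 2 ^ j) % 2
        = ((R:ℤ) - ξ) / 2 ^ j := Int.mul_ediv_add_emod _ 2
    have hA2 : 0 ≤ ((R:ℤ) / 2 ^ j) % 2 := Int.emod_nonneg _ (by norm_num)
    have hA3 : ((R:ℤ) / 2 ^ j) % 2 < 2 := Int.emod_lt_of_pos _ (by norm_num)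
    have hB2 : 0 ≤ (((R:ℤ) - ξ) / 2 ^ j) % 2 := Int.emod_nonneg _ (by norm_num)
    have hB3 : (((R:ℤ) - ξ) / 2 ^ j) % 2 < 2 := Int.emod_lt_of_pos _ (by norm_num)
    have hmono : ((R:ℤ) - ξ) / 2 ^ j ≤ (R:ℤ) / 2 ^ j :=
      Int.ediv_le_ediv (hpow j) (by linarith [Int.natCast_pos.2 hξ0])
    simp only [hd, e1, e2]
    omega
  have hanti : ∀ i k : ℕ, i ≤ k → d k ≤ d i := by
    intro i k hik
    induction k with
    | zero => simp [Nat.le_zero.mp hik]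
    | succ n ih =>
      rcases Nat.lt_or_ge i (n+1) with h | h
      · exact le_trans (hstep n).1 (ih (by omega))
      · have : i = n + 1 := by omega
        simp [this]
  -- bound: 2^j * d j < 2^j + ξ
  have hbound : ∀ j, 2 ^ j * d j < 2 ^ j + (ξ : ℤ) := by
    intro j
    set B := ((R:ℤ) - ξ) / 2 ^ j with hB
    set r := ((R:ℤ) - ξ) % 2 ^ j with hr
    have hBr : 2 ^ j * B + r = (R:ℤ) - ξ := Int.mul_ediv_add_emod _ _
    have hr0 : 0 ≤ r := Int.emod_nonneg _ (by positivity)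
    have hr1 : r < 2 ^ j := Int.emod_lt_of_pos _ (hpow j)
    have hRe : (R:ℤ) = r + (ξ:ℤ) + 2 ^ j * B := by linarith
    have hdiv : (R:ℤ) / 2 ^ j = (r + (ξ:ℤ)) / 2 ^ j + B := by
      rw [hRe, Int.add_mul_ediv_left _ _ (by positivity : (2:ℤ) ^ j ≠ 0)]
    have hq : 2 ^ j * ((r + (ξ:ℤ)) / 2 ^ j) + (r + (ξ:ℤ)) % 2 ^ j = r + (ξ:ℤ) :=
      Int.mul_ediv_add_emod _ _
    have hq0 : 0 ≤ (r + (ξ:ℤ)) % 2 ^ j := Int.emod_nonneg _ (by positivity)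
    have hdj : d j = (r + (ξ:ℤ)) / 2 ^ j := by simp only [hd, hdiv]; ring
    rw [hdj]; linarith
  -- d ℓx ≤ 1
  have hDlx : d ℓx ≤ 1 := by
    by_contra h
    push_neg at h
    have h2 : (2:ℤ) ≤ d ℓx := h
    have := hbound ℓx
    have hξ' : (ξ:ℤ) < 2 ^ ℓx := by exact_mod_cast hξ
    nlinarith [hpow ℓx]
  -- d j < 2^(ℓ-j) for j ≤ ℓx
  have hlt : ∀ j ≤ ℓx, d j < 2 ^ (ℓ - j) := by
    intro j hj
    have hb := hbound j
    have hξ' : (ξ:ℤ) < 2 ^ ℓx := by exact_mod_cast hξ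
    have h2j : (2:ℤ) ^ j ≤ 2 ^ ℓx := pow_le_pow_right₀ (by norm_num) hj
    have hsplit : (2:ℤ) ^ j * 2 ^ (ℓ - j) = 2 ^ ℓ := by
      rw [← pow_add]; congr 1; omega
    have h2l : (2:ℤ) ^ (ℓx + 1) ≤ 2 ^ ℓ := pow_le_pow_right₀ (by norm_num) (by omega)
    have : 2 ^ j * d j < 2 ^ j * 2 ^ (ℓ - j) := by
      rw [hsplit]
      calc 2 ^ j * d j < 2 ^ j + (ξ:ℤ) := hb
        _ < 2 ^ ℓx + 2 ^ ℓx := by linarith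
        _ = 2 ^ (ℓx + 1) := by ring
        _ ≤ 2 ^ ℓ := h2l
    exact lt_of_mul_lt_mul_left this (le_of_lt (hpow j))
  -- relate t' to d
  have key : ∀ j ≤ ℓx, (t' j : ℤ) + d j = 0 ∨ (t' j : ℤ) + d j = 2 ^ (ℓ - j) := by
    intro j hj
    have hjl : j ≤ ℓ := by omega
    set N : ℕ := (2 ^ ℓ - ξ + R) % 2 ^ ℓ with hN
    have hξl : ξ ≤ 2 ^ ℓ := by
      have : (2:ℕ) ^ ℓx ≤ 2 ^ ℓ := Nat.pow_le_pow_right (by norm_num) (by omega)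
      omega
    -- N ≡ R - ξ mod 2^ℓ over ℤ
    have hcast : (N : ℤ) = ((2:ℤ) ^ ℓ - ξ + R) % 2 ^ ℓ := by
      simp only [hN]
      push_cast [Nat.cast_sub hξl]
      ring_nf
    have hmod : ((2:ℤ) ^ ℓ - ξ + R) % 2 ^ ℓ = ((R:ℤ) - ξ) % 2 ^ ℓ := by
      conv_lhs => rw [show (2:ℤ) ^ ℓ - ξ + R = ((R:ℤ) - ξ) + 2 ^ ℓ * 1 by ring]
      rw [Int.add_mul_emod_self_left]
    have hNmod : (N : ℤ) % 2 ^ ℓ = ((R:ℤ) - ξ) % 2 ^ ℓ := by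
      rw [hcast, hmod, Int.emod_emod_of_dvd _ dvd_rfl]
    obtain ⟨k, hk⟩ : (2:ℤ) ^ ℓ ∣ (N : ℤ) - ((R:ℤ) - ξ) := by
      exact Int.ModEq.dvd (Int.ModEq.symm hNmod)
    have hNeq : (N : ℤ) = ((R:ℤ) - ξ) + 2 ^ j * (2 ^ (ℓ - j) * k) := by
      have : (2:ℤ) ^ j * 2 ^ (ℓ - j) = 2 ^ ℓ := by rw [← pow_add]; congr 1; omega
      nlinarith [hk]
    have hNdiv : (N : ℤ) / 2 ^ j = ((R:ℤ) - ξ) / 2 ^ j + 2 ^ (ℓ - j) * k := by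
      rw [hNeq, Int.add_mul_ediv_left _ _ (by positivity : (2:ℤ) ^ j ≠ 0)]
    have hc1 : ((N / 2 ^ j : ℕ) : ℤ) = (N : ℤ) / 2 ^ j := by
      push_cast [Int.natCast_ediv]; norm_num
    have hc2 : ((R / 2 ^ j : ℕ) : ℤ) = (R : ℤ) / 2 ^ j := by
      push_cast [Int.natCast_ediv]; norm_num
    have hXY : ((N / 2 ^ j : ℕ) : ℤ) - ((R / 2 ^ j : ℕ) : ℤ)
        = -(d j) + 2 ^ (ℓ - j) * k := by
      rw [hc1, hc2, hNdiv]; simp only [hd]; ring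
    have h5 : (t' j : ℤ) ≡ -(d j) [ZMOD 2 ^ (ℓ - j)] := by
      have h2 := ht2 j
      rw [hXY] at h2
      have h6 : (-(d j) + 2 ^ (ℓ - j) * k) % 2 ^ (ℓ - j) = (-(d j)) % 2 ^ (ℓ - j) :=
        Int.add_mul_emod_self_left (-(d j)) (2 ^ (ℓ - j)) k
      exact h2.trans h6
    have hdvd : (2:ℤ) ^ (ℓ - j) ∣ (t' j : ℤ) + d j := by
      have h7 := Int.ModEq.dvd h5
      rw [show -(d j) - (t' j : ℤ) = -((t' j : ℤ) + d j) by ring] at h7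
      exact dvd_neg.mp h7
    obtain ⟨c, hc⟩ := hdvd
    have ht1' : (t' j : ℤ) < 2 ^ (ℓ - j) := by exact_mod_cast ht1 j
    have hdj := h1 j
    have hdlt := hlt j hj
    have htnn : (0:ℤ) ≤ t' j := Int.ofNat_nonneg _
    have hup : (t' j : ℤ) + d j < 2 * 2 ^ (ℓ - j) := by linarith
    have hlo : (0:ℤ) ≤ (t' j : ℤ) + d j := by linarith
    have hP := hpow (ℓ - j)
    have hc0 : 0 ≤ c := by
      rw [hc] at hlo
      exact (mul_nonneg_iff_of_pos_left hP).mp hlo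
    have hc2' : c < 2 := by
      rw [hc, mul_comm (2:ℤ)] at hup
      exact (mul_lt_mul_iff_right₀ hP).mp hup
    interval_cases c
    · left; linarith [hc]
    · right; linarith [hc]
  -- characterizations
  have char0 : ∀ j ≤ ℓx, d j = 0 → t' j = 0 := by
    intro j hj hdj
    rcases key j hj with h | h
    · omega
    · exfalso
      have : (t' j : ℤ) = 2 ^ (ℓ - j) := by rw [hdj] at h; linarith
      have ht1' : (t' j : ℤ) < 2 ^ (ℓ - j) := by exact_mod_cast ht1 j
      linarith
  have char1 : ∀ j ≤ ℓx, d j = 1 → t' j = 2 ^ (ℓ - j) - 1 := by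
    intro j hj hdj
    rcases key j hj with h | h
    · exfalso; rw [hdj] at h; have := Int.ofNat_nonneg (t' j); omega
    · rw [hdj] at h
      have hc : (t' j : ℤ) = ((2 ^ (ℓ - j) : ℕ) : ℤ) - 1 := by push_cast; linarith
      have hpn : (1:ℕ) ≤ 2 ^ (ℓ - j) := Nat.one_le_two_pow
      omega
  -- define lam'' and lam'
  classical
  set lam'' := Nat.findGreatest (fun j => 1 ≤ d j) ℓx with hlam''
  have hlam''le : lam'' ≤ ℓx := Nat.findGreatest_le ℓx
  have hP0 : (1:ℤ) ≤ d 0 := by rw [h0]; exact_mod_cast hξ0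
  have hspec : 1 ≤ d lam'' :=
    Nat.findGreatest_spec (P := fun j => 1 ≤ d j) (Nat.zero_le ℓx) hP0
  have hgrt : ∀ k, lam'' < k → k ≤ ℓx → ¬ (1 ≤ d k) :=
    fun k hk hk' => Nat.findGreatest_is_greatest hk hk'
  have hdlam'' : d lam'' ≤ 1 := by
    rcases Nat.lt_or_ge lam'' ℓx with h | h
    · have hz : ¬ (1 ≤ d (lam'' + 1)) := hgrt _ (by omega) (by omega)
      have := (hstep lam'').2
      omega
    · have : lam'' = ℓx := by omega
      rw [this]; exact hDlx
  have hex : ∃ j, d j ≤ 1 := ⟨lam'', hdlam''⟩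
  set lam' := Nat.find hex with hlam'
  have hlam'spec : d lam' ≤ 1 := Nat.find_spec hex
  have hlam'le : lam' ≤ lam'' := Nat.find_min' hex hdlam''
  refine ⟨lam', lam'', hlam'le, hlam''le, ?_⟩
  intro j hj
  constructor
  · intro hj1 hj2
    apply char1 j hj
    have hle1 : d j ≤ d lam' := hanti lam' j hj1
    have hge1 : d lam'' ≤ d j := hanti j lam'' hj2
    omega
  · intro hj1
    apply char0 j hj
    have := hgrt j hj1 hj
    have := h1 j
    omega
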